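/- Let p, q ∈ (0,1) with p ≠ q, let ρ ∈ (0,1), set p₁ = p and p₂ = q, and let y = y(p,q) = ln((1−q)/(1−p)) / ln(p/q). Then the 2×2 real matrix A'(y) = [[p₁−y(1−p₁), q−y(1−q)], [q−y(1−q), p₂−y(1−p₂)]] · diag(ρ, 1−ρ) has two distinct nonzero real eigenvalues; equivalently, det(A'(y)) ≠ 0 and (tr A'(y))² ≠ 4 det(A'(y)). -/

import Mathlib

/-- `y(p,q) = ln((1−q)/(1−p)) / ln(p/q)`. -/
noncomputable def yval (p q : ℝ) : ℝ :=
  Real.log ((1 - q) / (1 - p)) / Real.log (p / q)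

/-- The matrix `A'(y)` from the censored SBM with two communities:
the signed-encoding matrix multiplied by `diag(ρ, 1−ρ)`. -/
noncomputable def Aprime (p₁ p₂ q ρ y : ℝ) : Matrix (Fin 2) (Fin 2) ℝ :=
  !![p₁ - y * (1 - p₁), q - y * (1 - q); q - y * (1 - q), p₂ - y * (1 - p₂)] *
    Matrix.diagonal ![ρ, 1 - ρ]

theorem stmt10 (p q ρ : ℝ)
    (hp : p ∈ Set.Ioo (0 : ℝ) 1) (hq : q ∈ Set.Ioo (0 : ℝ) 1) (hpq : p ≠ q)
    (hρ : ρ ∈ Set.Ioo (0 : ℝ) 1) :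
    (Aprime p q q ρ (yval p q)).det ≠ 0 ∧
    (Aprime p q q ρ (yval p q)).trace ^ 2 ≠ 4 * (Aprime p q q ρ (yval p q)).det := by
  obtain ⟨hp0, hp1⟩ := hp
  obtain ⟨hq0, hq1⟩ := hq
  obtain ⟨hρ0, hρ1⟩ := hρ
  have hp1' : (0:ℝ) < 1 - p := by linarith
  have hq1' : (0:ℝ) < 1 - q := by linarith
  set y := yval p q with hy
  set a := p - y * (1 - p) with ha
  set b := q - y * (1 - q) with hb
  -- log (p/q) ≠ 0
  have hpq' : p / q ≠ 1 := by
    intro h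
    exact hpq (by field_simp at h; linarith)
  have hL : Real.log (p / q) ≠ 0 := by
    intro h
    rcases Real.log_eq_zero.mp h with h | h | h
    · exact (div_pos hp0 hq0).ne' h
    · exact hpq' h
    · nlinarith [div_pos hp0 hq0]
  -- y > 0
  have hypos : 0 < y := by
    rcases lt_or_gt_of_ne hpq with hlt | hlt
    · have hL' : Real.log (p / q) < 0 :=
        Real.log_neg (div_pos hp0 hq0) ((div_lt_one hq0).mpr hlt)
      have hN : Real.log ((1 - q) / (1 - p)) < 0 :=
        Real.log_neg (div_pos hq1' hp1') ((div_lt_one hp1').mpr (by linarith))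
      exact div_pos_of_neg_of_neg hN hL'
    · have hL' : 0 < Real.log (p / q) := Real.log_pos ((one_lt_div hq0).mpr hlt)
      have hN : 0 < Real.log ((1 - q) / (1 - p)) :=
        Real.log_pos ((one_lt_div hp1').mpr (by linarith))
      exact div_pos hN hL'
  -- a ≠ b
  have hab : a ≠ b := by
    rw [ha, hb]
    intro h
    have h1 : (p - q) * (1 + y) = 0 := by nlinarith [h]
    rcases mul_eq_zero.mp h1 with h' | h'
    · exact hpq (by linarith)
    · linarith
  -- b ≠ 0 via strict concavity of log (KL positivity)
  have hxz : p / q ≠ (1 - p) / (1 - q) := by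
    intro h
    rw [div_eq_div_iff hq0.ne' hq1'.ne'] at h
    exact hpq (by nlinarith)
  have hkl : q * Real.log (p / q) + (1 - q) * Real.log ((1 - p) / (1 - q)) < 0 := by
    have := strictConcaveOn_log_Ioi.2 (Set.mem_Ioi.mpr (div_pos hp0 hq0))
      (Set.mem_Ioi.mpr (div_pos hp1' hq1')) hxz hq0 hq1' (by ring)
    simp only [smul_eq_mul] at this
    have heq : q * (p / q) + (1 - q) * ((1 - p) / (1 - q)) = 1 := by
      field_simp
      ring
    rw [heq, Real.log_one] at this
    linarith
  have hyL : y * Real.log (p / q) = Real.log ((1 - q) / (1 - p)) := by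
    rw [hy, yval, div_mul_cancel₀ _ hL]
  have h1 : Real.log ((1 - q) / (1 - p)) = - Real.log ((1 - p) / (1 - q)) := by
    rw [Real.log_div hq1'.ne' hp1'.ne', Real.log_div hp1'.ne' hq1'.ne']; ring
  have hbL : b * Real.log (p / q) < 0 := by
    have h2 : b * Real.log (p / q) =
        q * Real.log (p / q) - (1 - q) * (y * Real.log (p / q)) := by
      rw [hb]; ring
    rw [h2, hyL, h1]
    linarith
  have hbne : b ≠ 0 := by
    intro h
    rw [h, zero_mul] at hbL
    exact lt_irrefl 0 hbL
  -- compute det and trace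
  have hdet : (Aprime p q q ρ y).det = (a * b - b * b) * (ρ * (1 - ρ)) := by
    rw [Aprime, Matrix.det_mul, Matrix.det_fin_two_of, Matrix.det_diagonal,
      Fin.prod_univ_two]
    simp [ha, hb]
  have htr : (Aprime p q q ρ y).trace = a * ρ + b * (1 - ρ) := by
    rw [Aprime, Matrix.trace_fin_two]
    simp [Matrix.mul_diagonal, ha, hb]
  have hρρ : 0 < ρ * (1 - ρ) := mul_pos hρ0 (by linarith)
  constructor
  · rw [hdet]
    have hfac : a * b - b * b = (a - b) * b := by ring
    rw [hfac]
    exact mul_ne_zero (mul_ne_zero (sub_ne_zero.mpr hab) hbne) hρρ.ne'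
  · rw [hdet, htr]
    intro h
    have hb2 : 0 < b ^ 2 := ((pow_pos (abs_pos.mpr hbne) 2)).trans_eq (sq_abs b)
    nlinarith [sq_nonneg (a * ρ - b * (1 - ρ)), mul_pos hρρ hb2]
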